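/- A discrete Bayesian large-sample estimation problem has a consistent posterior if and only if it has convergent likelihood ratios, i.e., for all distinct θ, θ' ∈ Θ, the ratio P_{θ'}^{(1:n)}(x_{1:n}) / P_θ^{(1:n)}(x_{1:n}) converges almost surely to 0 when x is distributed according to P_θ. -/

import Mathlib

open MeasureTheory ProbabilityTheory Filter Set Topology
open scoped ENNReal

/-- The cylinder event determined by the first `n` observations of `ω`. -/
def cylinder {Θ : Type*} {X : ℕ → Type*} (n : ℕ) (ω : Θ × (∀ i, X i)) :
    Set (Θ × (∀ i, X i)) :=
  {ω' | ∀ i < n, ω'.2 i = ω.2 i}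


section Aux

variable {Ω : Type*} [mΩ : MeasurableSpace Ω]
variable {β : Type*} [Countable β] [MeasurableSpace β] [DiscreteMeasurableSpace β]

/-- Almost every point has a fiber of positive measure. -/
lemma ae_fiber_ne_zero (P : Measure Ω) (f : Ω → β) :
    ∀ᵐ ω ∂P, P (f ⁻¹' {f ω}) ≠ 0 := by
  rw [ae_iff]
  refine measure_mono_null
    (?_ : _ ⊆ ⋃ b : {b : β // P (f ⁻¹' {b}) = 0}, f ⁻¹' {(b : β)})
    (measure_iUnion_null fun b => b.2)
  intro ω hω
  simp only [Set.mem_setOf_eq, not_not] at hω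
  exact Set.mem_iUnion.2 ⟨⟨f ω, hω⟩, rfl⟩

/-- Conditional expectation of an indicator with respect to the σ-algebra generated by a
map into a countable discrete space: it is the conditional measure of the fibers. -/
lemma condexp_comap_discrete (μ : Measure Ω) [IsFiniteMeasure μ]
    (f : Ω → β) (hf : Measurable f) {A : Set Ω} (hA : MeasurableSet A) :
    (μ[A.indicator (fun _ => (1:ℝ)) | MeasurableSpace.comap f inferInstance])
      =ᵐ[μ] fun ω => (μ (A ∩ f ⁻¹' {f ω}) / μ (f ⁻¹' {f ω})).toReal := by
  have hm : MeasurableSpace.comap f inferInstance ≤ mΩ := hf.comap_le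
  haveI : IsFiniteMeasure (μ.trim hm) := isFiniteMeasure_trim hm
  set h : β → ℝ := fun b => (μ (A ∩ f ⁻¹' {b}) / μ (f ⁻¹' {b})).toReal with hh
  have hfm : @Measurable Ω β (MeasurableSpace.comap f inferInstance) _ f :=
    fun s hs => ⟨s, hs, rfl⟩
  have hgm : @Measurable Ω ℝ (MeasurableSpace.comap f inferInstance) _ (fun ω => h (f ω)) :=
    (Measurable.of_discrete (f := h)).comp hfm
  have hle1 : ∀ ω, ‖h (f ω)‖ ≤ 1 := by
    intro ω
    rw [Real.norm_eq_abs, abs_of_nonneg ENNReal.toReal_nonneg]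
    have hd1 : μ (A ∩ f ⁻¹' {f ω}) / μ (f ⁻¹' {f ω}) ≤ 1 := by
      apply ENNReal.div_le_of_le_mul
      rw [one_mul]
      exact measure_mono inter_subset_right
    calc (μ (A ∩ f ⁻¹' {f ω}) / μ (f ⁻¹' {f ω})).toReal
        ≤ (1 : ℝ≥0∞).toReal := ENNReal.toReal_mono (by simp) hd1
      _ = 1 := by simp
  have hint : Integrable (fun ω => h (f ω)) μ :=
    Integrable.mono' (integrable_const 1) ((hgm.mono hm le_rfl).aestronglyMeasurable)
      (ae_of_all _ hle1)
  refine (ae_eq_condExp_of_forall_setIntegral_eq hm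
      ((integrable_const (1:ℝ)).indicator hA) (fun s _ _ => hint.integrableOn)
      (fun s hs hμs => ?_) (StronglyMeasurable.aestronglyMeasurable (Measurable.stronglyMeasurable hgm))).symm
  obtain ⟨t, -, rfl⟩ := hs
  have hsub : ∀ b : t, f ⁻¹' {(b : β)} ⊆ f ⁻¹' t := fun b ω hb => by
    simp only [Set.mem_preimage, Set.mem_singleton_iff] at hb
    simp [hb, b.2]
  have hmb : ∀ b : t, MeasurableSet (f ⁻¹' {(b : β)}) := fun b => hf (MeasurableSet.of_discrete)
  have hdis : Pairwise (Function.onFun Disjoint fun b : t => f ⁻¹' {(b : β)}) := by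
    intro b c hbc
    refine Set.disjoint_left.2 fun ω hb hc => hbc ?_
    simp only [Set.mem_preimage, Set.mem_singleton_iff] at hb hc
    exact Subtype.ext (hb.symm.trans hc)
  have hcup : f ⁻¹' t = ⋃ b : t, f ⁻¹' {(b : β)} := by
    ext ω
    simp only [Set.mem_preimage, Set.mem_iUnion, Set.mem_singleton_iff]
    exact ⟨fun hω => ⟨⟨f ω, hω⟩, rfl⟩, fun ⟨b, hb⟩ => hb ▸ b.2⟩
  rw [hcup, integral_iUnion hmb hdis hint.integrableOn]
  -- RHS
  have hmeasU : MeasurableSet (⋃ b : t, f ⁻¹' {(b : β)}) := MeasurableSet.iUnion hmb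
  rw [show (fun ω => A.indicator (fun _ => (1:ℝ)) ω) = A.indicator (1 : Ω → ℝ) from rfl]
  rw [integral_indicator_one hA, measureReal_def, Measure.restrict_apply' hmeasU]
  rw [Set.inter_iUnion, measure_iUnion (hdis.mono fun b c hbc =>
      hbc.mono inter_subset_right inter_subset_right)
    (fun b => hA.inter (hmb b))]
  rw [ENNReal.tsum_toReal_eq (fun b => measure_ne_top μ _)]
  refine tsum_congr fun b => ?_
  have hconst : ∀ ω ∈ f ⁻¹' {(b : β)}, h (f ω) = h (b : β) := fun ω hω => by
    simp only [Set.mem_preimage, Set.mem_singleton_iff] at hω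
    rw [hω]
  rw [setIntegral_congr_fun (hmb b) hconst, setIntegral_const, measureReal_def]
  rcases eq_or_ne (μ (f ⁻¹' {(b : β)})) 0 with h0 | h0
  · have : μ (A ∩ f ⁻¹' {(b : β)}) = 0 := measure_mono_null inter_subset_right h0
    simp [h0, this, hh]
  · rw [hh]
    simp only [smul_eq_mul, ENNReal.toReal_div]
    rw [mul_div_cancel₀]
    exact ENNReal.toReal_ne_zero.2 ⟨h0, measure_ne_top μ _⟩

end Aux



section Setting

variable {Θ : Type*} [Countable Θ] [MeasurableSpace Θ] [DiscreteMeasurableSpace Θ]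
variable {X : ℕ → Type*} [∀ n, Countable (X n)] [∀ n, MeasurableSpace (X n)]
  [∀ n, DiscreteMeasurableSpace (X n)]

/-- The first `n` observations. -/
def obs (n : ℕ) : (Θ × (∀ i, X i)) → ∀ i : Fin n, X i := fun ω i => ω.2 i

lemma measurable_obs (n : ℕ) : Measurable (obs (Θ := Θ) (X := X) n) :=
  measurable_pi_lambda _ fun i => (measurable_pi_apply _).comp measurable_snd

lemma cylinder_eq (n : ℕ) (ω : Θ × (∀ i, X i)) :
    _root_.cylinder n ω = obs n ⁻¹' {obs n ω} := by
  ext ω'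
  simp only [_root_.cylinder, Set.mem_setOf_eq, Set.mem_preimage, Set.mem_singleton_iff]
  constructor
  · intro h
    funext i
    exact h i i.2
  · intro h i hi
    exact congrFun h ⟨i, hi⟩

lemma measurableSet_cylinder (n : ℕ) (ω : Θ × (∀ i, X i)) :
    MeasurableSet (_root_.cylinder n ω) := by
  rw [cylinder_eq]
  exact measurable_obs n MeasurableSet.of_discrete

/-- The filtration generated by the observations. -/
def obsFiltration : Filtration ℕ (inferInstance : MeasurableSpace (Θ × (∀ i, X i))) where
  seq n := MeasurableSpace.comap (obs (Θ := Θ) (X := X) n) inferInstance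
  mono' := by
    intro n m hnm s hs
    obtain ⟨t, -, rfl⟩ := hs
    exact ⟨(fun x (i : Fin n) => x ⟨i, lt_of_lt_of_le i.2 hnm⟩) ⁻¹' t,
      MeasurableSet.of_discrete, rfl⟩
  le' n := (measurable_obs n).comap_le

/-- `_root_.cylinder`s a.s. have positive measure. -/
lemma ae_cylinder_ne_zero (P : Measure (Θ × (∀ i, X i))) :
    ∀ᵐ ω ∂P, ∀ n, P (_root_.cylinder n ω) ≠ 0 := by
  rw [ae_all_iff]
  intro n
  filter_upwards [ae_fiber_ne_zero P (obs (Θ := Θ) (X := X) n)] with ω hω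
  rw [cylinder_eq]
  exact hω

/-- The posterior probability of `A` given the first `n` observations. -/
lemma cond_cylinder_apply (μ : Measure (Θ × (∀ i, X i))) (n : ℕ) (ω : Θ × (∀ i, X i))
    (A : Set (Θ × (∀ i, X i))) :
    (μ[|_root_.cylinder n ω]) A = μ (A ∩ _root_.cylinder n ω) / μ (_root_.cylinder n ω) := by
  rw [cond_apply (measurableSet_cylinder n ω), Set.inter_comm, div_eq_mul_inv, mul_comm]

/-- Lévy's upward theorem for the posterior probabilities. -/
lemma tendsto_posterior_condexp (μ : Measure (Θ × (∀ i, X i))) [IsFiniteMeasure μ]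
    {A : Set (Θ × (∀ i, X i))} (hA : MeasurableSet A) :
    ∀ᵐ ω ∂μ, Tendsto (fun n => ((μ[|_root_.cylinder n ω]) A).toReal) atTop
      (𝓝 ((μ[A.indicator (fun _ => (1:ℝ)) | ⨆ n, obsFiltration (Θ := Θ) (X := X) n]) ω)) := by
  have hcond : ∀ n : ℕ, (μ[A.indicator (fun _ => (1:ℝ)) | obsFiltration (Θ := Θ) (X := X) n])
      =ᵐ[μ] fun ω => ((μ[|_root_.cylinder n ω]) A).toReal := by
    intro n
    filter_upwards [condexp_comap_discrete μ (obs (Θ := Θ) (X := X) n) (measurable_obs n) hA]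
      with ω hω
    rw [show (obsFiltration (Θ := Θ) (X := X) n : MeasurableSpace _)
      = MeasurableSpace.comap (obs (Θ := Θ) (X := X) n) inferInstance from rfl, hω,
      cond_cylinder_apply, cylinder_eq]
  filter_upwards [ae_all_iff.2 hcond, tendsto_ae_condExp (ℱ := obsFiltration (Θ := Θ) (X := X))
    (A.indicator (fun _ => (1:ℝ)))] with ω h1 h2
  exact h2.congr fun n => h1 n
end Setting

section ENNRealCalc

lemma ennreal_calcF {α β x y z : ℝ≥0∞} (hα0 : α ≠ 0) (hα : α ≠ ∞) (hβ0 : β ≠ 0) (hβ : β ≠ ∞)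
    (hz0 : z ≠ 0) (hz : z ≠ ∞) :
    (β⁻¹ * y) / (α⁻¹ * x) = (α / β) * ((y / z) / (x / z)) := by
  have h1 : y / z = z⁻¹ * y := by rw [div_eq_mul_inv, mul_comm]
  have h2 : x / z = z⁻¹ * x := by rw [div_eq_mul_inv, mul_comm]
  rw [h1, h2, ENNReal.mul_div_mul_left _ _ (ENNReal.inv_ne_zero.2 hz) (ENNReal.inv_ne_top.2 hz0),
    div_eq_mul_inv,
    ENNReal.mul_inv (Or.inl (ENNReal.inv_ne_zero.2 hα)) (Or.inl (ENNReal.inv_ne_top.2 hα0)),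
    inv_inv, div_eq_mul_inv, div_eq_mul_inv]
  ring

lemma ennreal_calcB {α γ x u : ℝ≥0∞} (hα0 : α ≠ 0) (hα : α ≠ ∞) (hγ0 : γ ≠ 0) (hγ : γ ≠ ∞) :
    (α / γ) * ((α⁻¹ * x) / (γ⁻¹ * u)) = x / u := by
  rw [div_eq_mul_inv, div_eq_mul_inv, div_eq_mul_inv,
    ENNReal.mul_inv (Or.inl (ENNReal.inv_ne_zero.2 hγ)) (Or.inl (ENNReal.inv_ne_top.2 hγ0)),
    inv_inv]
  calc α * γ⁻¹ * (α⁻¹ * x * (γ * u⁻¹)) = α * α⁻¹ * (γ⁻¹ * γ) * (x * u⁻¹) := by ring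
  _ = x * u⁻¹ := by
      rw [ENNReal.mul_inv_cancel hα0 hα, ENNReal.inv_mul_cancel hγ0 hγ, one_mul, one_mul]

end ENNRealCalc

lemma cond_le_one' {Ω : Type*} [MeasurableSpace Ω] (μ : Measure Ω) [IsFiniteMeasure μ]
    (s t : Set Ω) : (μ[|s]) t ≤ 1 := by
  rcases eq_or_ne (μ s) 0 with h0 | h0
  · rw [cond_eq_zero_of_meas_eq_zero h0]
    simp
  · haveI := cond_isProbabilityMeasure (μ := μ) h0
    exact prob_le_one

lemma ae_cond_iff_ae_restrict {Ω : Type*} [MeasurableSpace Ω] {μ : Measure Ω}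
    [IsFiniteMeasure μ] {s : Set Ω} {p : Ω → Prop} :
    (∀ᵐ ω ∂μ[|s], p ω) ↔ ∀ᵐ ω ∂μ.restrict s, p ω := by
  rw [ProbabilityTheory.cond]
  simp only [ae_iff, Measure.smul_apply, smul_eq_mul, mul_eq_zero, ENNReal.inv_eq_zero,
    measure_ne_top μ s, false_or]


/-- A discrete Bayesian large-sample estimation problem has a consistent posterior iff it has
convergent likelihood ratios: for all distinct `θ, θ'`, the likelihood ratio of `θ'` over `θ`
converges to `0` almost surely under `P_θ`. -/
theorem consistent_posterior_iff_convergent_likelihood_ratios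
    {Θ : Type*} [Countable Θ] [MeasurableSpace Θ] [DiscreteMeasurableSpace Θ]
    {X : ℕ → Type*} [∀ n, Countable (X n)] [∀ n, MeasurableSpace (X n)]
    [∀ n, DiscreteMeasurableSpace (X n)]
    (μ : Measure (Θ × (∀ i, X i))) [IsProbabilityMeasure μ]
    (hprior : ∀ θ : Θ, 0 < μ (Prod.fst ⁻¹' {θ})) :
    (∀ θ : Θ,
        ∀ᵐ ω ∂(μ[|Prod.fst ⁻¹' {θ}]),
          Tendsto (fun n : ℕ => (μ[|cylinder n ω]) (Prod.fst ⁻¹' {θ})) atTop (𝓝 1))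
      ↔
    (∀ θ θ' : Θ, θ' ≠ θ →
        ∀ᵐ ω ∂(μ[|Prod.fst ⁻¹' {θ}]),
          Tendsto
            (fun n : ℕ =>
              (μ[|Prod.fst ⁻¹' {θ'}]) (cylinder n ω) / (μ[|Prod.fst ⁻¹' {θ}]) (cylinder n ω))
            atTop (𝓝 0)) := by
  have hA : ∀ t : Θ, MeasurableSet (Prod.fst ⁻¹' {t} : Set (Θ × (∀ i, X i))) :=
    fun t => measurable_fst MeasurableSet.of_discrete
  have hA0 : ∀ t : Θ, μ (Prod.fst ⁻¹' {t}) ≠ 0 := fun t => (hprior t).ne'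
  have hAtop : ∀ t : Θ, μ (Prod.fst ⁻¹' {t}) ≠ ∞ := fun t => measure_ne_top μ _
  constructor
  · -- consistency → convergent likelihood ratios
    intro h θ θ' hθ'
    have hdisjA : Disjoint (Prod.fst ⁻¹' {θ} : Set (Θ × (∀ i, X i))) (Prod.fst ⁻¹' {θ'}) :=
      Disjoint.preimage _ (Set.disjoint_singleton.2 (Ne.symm hθ'))
    filter_upwards [h θ, ae_cylinder_ne_zero (μ[|Prod.fst ⁻¹' {θ}])] with ω h1 h2
    set x : ℕ → ℝ≥0∞ := fun n => μ (Prod.fst ⁻¹' {θ} ∩ _root_.cylinder n ω) with hxdef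
    set y : ℕ → ℝ≥0∞ := fun n => μ (Prod.fst ⁻¹' {θ'} ∩ _root_.cylinder n ω) with hydef
    set z : ℕ → ℝ≥0∞ := fun n => μ (_root_.cylinder n ω) with hzdef
    have hx0 : ∀ n, x n ≠ 0 := by
      intro n hx
      apply h2 n
      rw [cond_apply (hA θ),
        show μ (Prod.fst ⁻¹' {θ} ∩ _root_.cylinder n ω) = 0 from hx, mul_zero]
    have hz0 : ∀ n, z n ≠ 0 := fun n hz =>
      hx0 n (le_antisymm (hz ▸ measure_mono inter_subset_right) zero_le)
    have hztop : ∀ n, z n ≠ ∞ := fun n => measure_ne_top μ _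
    have hq : Tendsto (fun n => x n / z n) atTop (𝓝 1) := by
      refine Tendsto.congr (fun n => ?_) h1
      exact cond_cylinder_apply μ n ω _
    have hsum : ∀ n, x n / z n + y n / z n ≤ 1 := by
      intro n
      rw [ENNReal.div_add_div_same]
      apply ENNReal.div_le_of_le_mul
      rw [one_mul]
      rw [← measure_union (hdisjA.mono inter_subset_left inter_subset_left)
        ((hA θ').inter (measurableSet_cylinder n ω))]
      exact measure_mono (Set.union_subset inter_subset_right inter_subset_right)
    have hq' : Tendsto (fun n => y n / z n) atTop (𝓝 0) := by
      have h1q : Tendsto (fun n => 1 - x n / z n) atTop (𝓝 0) := by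
        have := ENNReal.Tendsto.sub ((tendsto_const_nhds : Tendsto (fun _ : ℕ => (1:ℝ≥0∞)) atTop (𝓝 1))) hq
          (Or.inl ENNReal.one_ne_top)
        simpa using this
      exact tendsto_of_tendsto_of_tendsto_of_le_of_le tendsto_const_nhds h1q
        (fun n => zero_le) (fun n => ENNReal.le_sub_of_add_le_left (ENNReal.div_lt_top (measure_ne_top μ _) (hz0 n)).ne (hsum n))
    have hrw : ∀ n, (μ[|Prod.fst ⁻¹' {θ'}]) (_root_.cylinder n ω) / (μ[|Prod.fst ⁻¹' {θ}]) (_root_.cylinder n ω)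
        = (μ (Prod.fst ⁻¹' {θ}) / μ (Prod.fst ⁻¹' {θ'})) * ((y n / z n) / (x n / z n)) := by
      intro n
      rw [cond_apply (hA θ'), cond_apply (hA θ)]
      exact ennreal_calcF (hA0 θ) (hAtop θ) (hA0 θ') (hAtop θ') (hz0 n) (hztop n)
    have hlim : Tendsto (fun n => (μ (Prod.fst ⁻¹' {θ}) / μ (Prod.fst ⁻¹' {θ'}))
        * ((y n / z n) / (x n / z n))) atTop (𝓝 0) := by
      have hdiv : Tendsto (fun n => (y n / z n) / (x n / z n)) atTop (𝓝 0) := by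
        have := ENNReal.Tendsto.div hq' (Or.inr one_ne_zero) hq (Or.inl ENNReal.one_ne_top)
        simpa using this
      have := ENNReal.Tendsto.const_mul (a := μ (Prod.fst ⁻¹' {θ}) / μ (Prod.fst ⁻¹' {θ'})) hdiv
        (Or.inr ((ENNReal.div_lt_top (hAtop θ) (hA0 θ')).ne))
      simpa using this
    exact (hlim.congr fun n => (hrw n).symm)
  · -- convergent likelihood ratios → consistency
    intro h θ
    have hle : (⨆ n, (obsFiltration (Θ := Θ) (X := X) n : MeasurableSpace (Θ × (∀ i, X i))))
        ≤ (inferInstance : MeasurableSpace (Θ × (∀ i, X i))) :=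
      iSup_le fun n => (obsFiltration (Θ := Θ) (X := X)).le n
    haveI : IsFiniteMeasure (μ.trim hle) := isFiniteMeasure_trim hle
    set Z : (Θ × (∀ i, X i)) → ℝ :=
      μ[(Prod.fst ⁻¹' {θ}).indicator (fun _ => (1:ℝ)) |
        ⨆ n, obsFiltration (Θ := Θ) (X := X) n] with hZdef
    have hlevy := tendsto_posterior_condexp μ (hA θ)
    -- On the complement of `A θ`, the posterior of `A θ` tends to `0`.
    have hstep : ∀ θ'' , θ'' ≠ θ → ∀ᵐ ω ∂μ.restrict (Prod.fst ⁻¹' {θ''}),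
        Tendsto (fun n => (μ[|_root_.cylinder n ω]) (Prod.fst ⁻¹' {θ})) atTop (𝓝 0) := by
      intro θ'' hne
      rw [← ae_cond_iff_ae_restrict]
      filter_upwards [h θ'' θ (Ne.symm hne), ae_cylinder_ne_zero (μ[|Prod.fst ⁻¹' {θ''}])]
        with ω hr hc
      have hu0 : ∀ n, μ (Prod.fst ⁻¹' {θ''} ∩ _root_.cylinder n ω) ≠ 0 := by
        intro n h0
        apply hc n
        rw [cond_apply (hA θ''), h0, mul_zero]
      have hb : ∀ n, (μ[|_root_.cylinder n ω]) (Prod.fst ⁻¹' {θ})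
          ≤ (μ (Prod.fst ⁻¹' {θ}) / μ (Prod.fst ⁻¹' {θ''}))
            * ((μ[|Prod.fst ⁻¹' {θ}]) (_root_.cylinder n ω)
              / (μ[|Prod.fst ⁻¹' {θ''}]) (_root_.cylinder n ω)) := by
        intro n
        rw [cond_cylinder_apply, cond_apply (hA θ), cond_apply (hA θ''),
          ennreal_calcB (hA0 θ) (hAtop θ) (hA0 θ'') (hAtop θ'')]
        exact ENNReal.div_le_div le_rfl (measure_mono inter_subset_right)
      have hlim : Tendsto (fun n => (μ (Prod.fst ⁻¹' {θ}) / μ (Prod.fst ⁻¹' {θ''}))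
          * ((μ[|Prod.fst ⁻¹' {θ}]) (_root_.cylinder n ω)
            / (μ[|Prod.fst ⁻¹' {θ''}]) (_root_.cylinder n ω))) atTop (𝓝 0) := by
        have := ENNReal.Tendsto.const_mul
          (a := μ (Prod.fst ⁻¹' {θ}) / μ (Prod.fst ⁻¹' {θ''})) hr
          (Or.inr ((ENNReal.div_lt_top (hAtop θ) (hA0 θ'')).ne))
        simpa using this
      exact tendsto_of_tendsto_of_tendsto_of_le_of_le tendsto_const_nhds hlim
        (fun n => zero_le) hb
    have hcompl : ∀ᵐ ω ∂μ.restrict ((Prod.fst ⁻¹' {θ})ᶜ),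
        Tendsto (fun n => (μ[|_root_.cylinder n ω]) (Prod.fst ⁻¹' {θ})) atTop (𝓝 0) := by
      rw [ae_iff, Measure.restrict_apply' (hA θ).compl]
      refine measure_mono_null (?_ : _ ⊆ ⋃ (t : {t : Θ // t ≠ θ}),
        ({ω | ¬ Tendsto (fun n => (μ[|_root_.cylinder n ω]) (Prod.fst ⁻¹' {θ})) atTop (𝓝 0)}
          ∩ Prod.fst ⁻¹' {(t : Θ)})) (measure_iUnion_null fun t => ?_)
      · rintro ω ⟨hbad, hmem⟩
        exact Set.mem_iUnion.2 ⟨⟨ω.1, hmem⟩, hbad, rfl⟩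
      · have := hstep (t : Θ) t.2
        rwa [ae_iff, Measure.restrict_apply' (hA (t : Θ))] at this
    have hZ0 : Z =ᵐ[μ.restrict ((Prod.fst ⁻¹' {θ})ᶜ)] 0 := by
      filter_upwards [ae_restrict_of_ae hlevy, hcompl] with ω h1 h2
      have h2' : Tendsto (fun n => ((μ[|_root_.cylinder n ω]) (Prod.fst ⁻¹' {θ})).toReal) atTop
          (𝓝 0) := by
        have := (ENNReal.tendsto_toReal (a := 0) (by simp)).comp h2
        simpa [Function.comp_def] using this
      exact tendsto_nhds_unique h1 h2'
    have hZint : Integrable Z μ := integrable_condExp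
    have hintZ : ∫ ω, Z ω ∂μ = (μ (Prod.fst ⁻¹' {θ})).toReal := by
      rw [hZdef, integral_condExp hle]
      rw [show (fun ω => (Prod.fst ⁻¹' {θ}).indicator (fun _ => (1:ℝ)) ω)
        = (Prod.fst ⁻¹' {θ}).indicator (1 : (Θ × (∀ i, X i)) → ℝ) from rfl]
      exact integral_indicator_one (hA θ)
    have hint_compl : ∫ ω in (Prod.fst ⁻¹' {θ})ᶜ, Z ω ∂μ = 0 := by
      rw [integral_congr_ae hZ0]
      simp
    have hint_A : ∫ ω in Prod.fst ⁻¹' {θ}, Z ω ∂μ = (μ (Prod.fst ⁻¹' {θ})).toReal := by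
      have hsplit := integral_add_compl (hA θ) hZint
      rw [hint_compl, add_zero] at hsplit
      rw [hsplit, hintZ]
    have hZ1 : Z ≤ᵐ[μ] fun _ => (1:ℝ) := by
      have hind : (Prod.fst ⁻¹' {θ} : Set (Θ × (∀ i, X i))).indicator (fun _ => (1:ℝ))
          ≤ᵐ[μ] fun _ => (1:ℝ) := ae_of_all _ fun ω => by
        classical
        by_cases hω : ω ∈ (Prod.fst ⁻¹' {θ} : Set (Θ × (∀ i, X i)))
        · rw [Set.indicator_of_mem hω]
        · rw [Set.indicator_of_notMem hω]; exact zero_le_one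
      have := condExp_mono (m := ⨆ n, (obsFiltration (Θ := Θ) (X := X) n))
        ((integrable_const (1:ℝ)).indicator (hA θ)) (integrable_const (1:ℝ)) hind
      rw [condExp_const hle] at this
      exact this
    have hone : (fun ω => 1 - Z ω) =ᵐ[μ.restrict (Prod.fst ⁻¹' {θ})] 0 := by
      rw [← integral_eq_zero_iff_of_nonneg_ae]
      · rw [integral_sub (integrable_const 1) hZint.restrict, integral_const, hint_A,
          measureReal_restrict_apply_univ]
        simp [measureReal_def]
      · filter_upwards [ae_restrict_of_ae hZ1] with ω hω
        simp only [Pi.zero_apply]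
        linarith [hω]
      · exact (integrable_const 1).sub hZint.restrict
    have hfinal : ∀ᵐ ω ∂μ.restrict (Prod.fst ⁻¹' {θ}),
        Tendsto (fun n => (μ[|_root_.cylinder n ω]) (Prod.fst ⁻¹' {θ})) atTop (𝓝 1) := by
      filter_upwards [ae_restrict_of_ae hlevy, hone] with ω h1 h2
      have hZω : Z ω = 1 := by
        have : 1 - Z ω = 0 := h2
        linarith
      rw [hZdef] at hZω
      rw [hZω] at h1
      have hofreal := ENNReal.tendsto_ofReal h1
      rw [ENNReal.ofReal_one] at hofreal
      refine hofreal.congr fun n => ?_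
      exact ENNReal.ofReal_toReal
        (ne_top_of_le_ne_top ENNReal.one_ne_top (cond_le_one' μ _ _))
    exact ae_cond_iff_ae_restrict.2 hfinal
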